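/- Let V be a nonzero finite-dimensional vector space over a field k of characteristic 0, let A : V → V be linear, and let π be a monic irreducible polynomial over k of degree r with π(A) = 0 on V. Then V is an internal direct sum V = U_1 ⊕ ⋯ ⊕ U_ℓ of A-invariant subspaces, where each U_i has a basis of the form {u_i, Au_i, …, A^{r−1}u_i} (an A-cyclic subspace of dimension r) and the minimal polynomial of A restricted to each U_i is π. In particular r divides dim V. -/

import Mathlib

open Polynomial

set_option maxHeartbeats 1000000

/-- If `π` is a monic irreducible polynomial of degree `r` with `π(A) = 0` on a
nonzero finite-dimensional space `V`, then `V` is an internal direct sum of `A`-invariant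
subspaces `U i`, each having a basis `u i, A (u i), …, A^(r-1) (u i)` (an `A`-cyclic subspace of
dimension `r`), the minimal polynomial of `A` restricted to each `U i` being `π`.
In particular `r` divides `dim V`. -/
theorem stmt_5 {k V : Type*} [Field k] [CharZero k] [AddCommGroup V] [Module k V]
    [FiniteDimensional k V] [Nontrivial V] (A : V →ₗ[k] V) (π : k[X]) (hmonic : π.Monic)
    (hirr : Irreducible π) (r : ℕ) (hr : π.natDegree = r) (hπA : aeval A π = 0) :
    (∃ (ℓ : ℕ) (u : Fin ℓ → V),
      DirectSum.IsInternal
        (fun i : Fin ℓ => Submodule.span k (Set.range fun j : Fin r => (A ^ (j : ℕ)) (u i))) ∧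
      (∀ i : Fin ℓ, LinearIndependent k (fun j : Fin r => (A ^ (j : ℕ)) (u i))) ∧
      (∀ i : Fin ℓ,
        ∀ x ∈ Submodule.span k (Set.range fun j : Fin r => (A ^ (j : ℕ)) (u i)),
          A x ∈ Submodule.span k (Set.range fun j : Fin r => (A ^ (j : ℕ)) (u i))) ∧
      (∀ (i : Fin ℓ)
        (hU : ∀ x ∈ Submodule.span k (Set.range fun j : Fin r => (A ^ (j : ℕ)) (u i)),
          A x ∈ Submodule.span k (Set.range fun j : Fin r => (A ^ (j : ℕ)) (u i))),
        minpoly k (A.restrict hU) = π)) ∧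
    r ∣ Module.finrank k V := by
  haveI := Fact.mk hirr
  have hπ0 : π ≠ 0 := hmonic.ne_zero
  have hrpos : 0 < r := hr ▸ hirr.natDegree_pos
  -- V as a vector space over K = AdjoinRoot π
  let φ : AdjoinRoot π →+* Module.End k V :=
    Ideal.Quotient.lift (Ideal.span {π}) (aeval A).toRingHom (by
      intro a ha
      rw [Ideal.mem_span_singleton] at ha
      obtain ⟨c, rfl⟩ := ha
      simp [hπA])
  have hφmk : ∀ p : k[X], φ (AdjoinRoot.mk π p) = aeval A p := fun p => rfl
  letI : Module (AdjoinRoot π) V := Module.compHom V φ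
  have smul_def : ∀ (x : AdjoinRoot π) (v : V), x • v = φ x v := fun _ _ => rfl
  haveI : IsScalarTower k (AdjoinRoot π) V := ⟨fun a x v => by
    rw [Algebra.smul_def, smul_def, smul_def, map_mul]
    have : φ (algebraMap k (AdjoinRoot π) a) = algebraMap k (Module.End k V) a := by
      rw [AdjoinRoot.algebraMap_eq]
      show φ (AdjoinRoot.mk π (C a)) = _
      rw [hφmk, aeval_C]
    rw [this]
    simp [Module.algebraMap_end_apply]⟩
  have hroot : ∀ v : V, (AdjoinRoot.root π) • v = A v := by
    intro v
    rw [smul_def]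
    show φ (AdjoinRoot.mk π X) v = A v
    rw [hφmk]; simp
  have hpow : ∀ (j : ℕ) (v : V), (AdjoinRoot.root π ^ j) • v = (A ^ j) v := by
    intro j v
    rw [smul_def, map_pow]
    have : φ (AdjoinRoot.root π) = A := by
      show φ (AdjoinRoot.mk π X) = A; rw [hφmk]; simp
    rw [this]
  let pb := AdjoinRoot.powerBasis hπ0
  have hdim : pb.dim = r := hr
  haveI : FiniteDimensional k (AdjoinRoot π) := Module.Finite.of_basis pb.basis
  haveI : FiniteDimensional (AdjoinRoot π) V := FiniteDimensional.right k (AdjoinRoot π) V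
  -- the key span identity
  have hzero : ∀ v : V, v ∈ Submodule.span k (Set.range fun j : Fin r => (A ^ (j : ℕ)) v) :=
    fun v => Submodule.subset_span ⟨⟨0, hrpos⟩, by simp⟩
  have key : ∀ v : V, Submodule.span k (Set.range fun j : Fin r => (A ^ (j : ℕ)) v)
      = Submodule.restrictScalars k (Submodule.span (AdjoinRoot π) {v}) := by
    intro v
    apply le_antisymm
    · rw [Submodule.span_le]
      rintro _ ⟨j, rfl⟩
      simp only [SetLike.mem_coe, Submodule.restrictScalars_mem]
      rw [← hpow]
      exact Submodule.smul_mem _ _ (Submodule.mem_span_singleton_self v)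
    · rintro x hx
      rw [Submodule.restrictScalars_mem, Submodule.mem_span_singleton] at hx
      obtain ⟨c, rfl⟩ := hx
      obtain ⟨p, rfl⟩ := AdjoinRoot.mk_surjective c
      have hmod : AdjoinRoot.mk π p = AdjoinRoot.mk π (p %ₘ π) := by
        rw [AdjoinRoot.mk_eq_mk]
        exact ⟨p /ₘ π, by nth_rewrite 1 [← modByMonic_add_div p π]; ring⟩
      rw [hmod]
      by_cases hq0 : p %ₘ π = 0
      · rw [hq0]
        simp only [map_zero, zero_smul]
        exact Submodule.zero_mem _
      · have hqdeg : (p %ₘ π).natDegree < r := by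
          rw [← hr]
          exact natDegree_lt_natDegree hq0 (degree_modByMonic_lt p hmonic)
        have h1 : (AdjoinRoot.mk π (p %ₘ π)) • v = (aeval A (p %ₘ π)) v := by
          rw [smul_def, hφmk]
        rw [h1, aeval_eq_sum_range' hqdeg, LinearMap.sum_apply]
        apply Submodule.sum_mem
        intro i hi
        rw [LinearMap.smul_apply]
        exact Submodule.smul_mem _ _
          (Submodule.subset_span ⟨⟨i, Finset.mem_range.mp hi⟩, rfl⟩)
  -- A-invariance
  have hinv : ∀ v : V, ∀ x ∈ Submodule.span k (Set.range fun j : Fin r => (A ^ (j : ℕ)) v),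
      A x ∈ Submodule.span k (Set.range fun j : Fin r => (A ^ (j : ℕ)) v) := by
    intro v x hx
    rw [key] at hx ⊢
    rw [Submodule.restrictScalars_mem] at hx ⊢
    rw [← hroot]
    exact Submodule.smul_mem _ _ hx
  -- linear independence
  have hindep : ∀ v : V, v ≠ 0 → LinearIndependent k fun j : Fin r => (A ^ (j : ℕ)) v := by
    intro v hv
    let ψ : AdjoinRoot π →ₗ[k] V :=
      { toFun := fun x => x • v
        map_add' := fun x y => add_smul x y v
        map_smul' := fun a x => smul_assoc a x v }
    have hker : LinearMap.ker ψ = ⊥ := by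
      rw [LinearMap.ker_eq_bot']
      intro x hx
      by_contra h
      apply hv
      have h2 : x⁻¹ • (x • v) = 0 := by rw [show x • v = (0:V) from hx, smul_zero]
      rwa [smul_smul, inv_mul_cancel₀ h, one_smul] at h2
    have hroots : LinearIndependent k fun j : Fin r => (AdjoinRoot.root π) ^ (j : ℕ) := by
      have h2 := (pb.basis.linearIndependent).comp (finCongr hdim.symm)
        (finCongr hdim.symm).injective
      convert h2 with j
      simp [PowerBasis.coe_basis]
      rfl
      rfl
    have h3 := hroots.map' ψ hker
    convert h3 with j
    exact (hpow _ _).symm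
    rfl
  -- minimal polynomial of restriction
  have hmin : ∀ (U : Submodule k V) (hU : ∀ x ∈ U, A x ∈ U), Nontrivial U →
      minpoly k (A.restrict hU) = π := by
    intro U hU hnt
    set B := A.restrict hU with hB
    have hres : ∀ (p : k[X]) (x : U), ((aeval B p) x : V) = (aeval A p) (x : V) := by
      intro p x
      induction p using Polynomial.induction_on' with
      | add p q hp hq => simp [hp, hq]
      | monomial n a =>
        rw [aeval_monomial, aeval_monomial, Module.End.mul_apply, Module.End.mul_apply,
          Module.algebraMap_end_apply, Module.algebraMap_end_apply, hB,
          Module.End.pow_restrict n hU]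
        rw [Submodule.coe_smul, LinearMap.restrict_coe_apply]
    have hint : IsIntegral k B := Algebra.IsIntegral.isIntegral B
    have hdvd : minpoly k B ∣ π := by
      apply minpoly.dvd
      ext x
      have := hres π x
      rw [hπA] at this
      simpa using this
    obtain ⟨c, hc⟩ := hdvd
    rcases hirr.isUnit_or_isUnit hc with hu | hu
    · exfalso
      have h1 : minpoly k B = 1 := (minpoly.monic hint).eq_one_of_isUnit hu
      have h2 := minpoly.aeval k B
      rw [h1, map_one] at h2
      obtain ⟨y, z, hyz⟩ := hnt
      apply hyz
      have hy : (1 : Module.End k U) y = (0 : Module.End k U) y := by rw [h2]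
      have hz : (1 : Module.End k U) z = (0 : Module.End k U) z := by rw [h2]
      simp only [Module.End.one_apply, LinearMap.zero_apply] at hy hz
      rw [hy, hz]
    · obtain ⟨w, hw⟩ := hu
      exact eq_of_monic_of_associated (minpoly.monic hint) hmonic ⟨w, by rw [hw]; exact hc.symm⟩
  -- assemble
  set K := AdjoinRoot π
  refine ⟨⟨Module.finrank K V, fun i => Module.finBasis K V i, ?_, ?_, ?_, ?_⟩, ?_⟩
  · have h1 : DirectSum.IsInternal
        (fun i : Fin (Module.finrank K V) => Submodule.span K {Module.finBasis K V i}) := by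
      apply DirectSum.isInternal_submodule_of_iSupIndep_of_iSup_eq_top
      · exact (Module.finBasis K V).linearIndependent.iSupIndep_span_singleton
      · rw [← Submodule.span_range_eq_iSup, Module.Basis.span_eq]
    simp_rw [key]
    exact h1
  · intro i
    exact hindep _ ((Module.finBasis K V).ne_zero i)
  · intro i
    exact hinv _
  · intro i hU
    apply hmin _ hU
    refine ⟨⟨Module.finBasis K V i, hzero _⟩, 0, fun h => (Module.finBasis K V).ne_zero i ?_⟩
    simpa using congrArg Subtype.val h
  · refine ⟨Module.finrank K V, ?_⟩
    have hfr : Module.finrank k K = r := by rw [pb.finrank, hdim]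
    rw [← Module.finrank_mul_finrank k K V, hfr]
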